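/- If in addition to the hypotheses v(T) ≤ η(T) where η(t) = exp(∫_{t₀}^t γ(s) ds)/μ(t), and α(t,1/μ(t)) + β(t) ≤ (1/μ(t))(γ(t) - μ'(t)/μ(t)) holds for all t in [t₀,T], and v(t) ≤ η(t) on [t₀,T], then v'(t) ≤ η'(t) for all t in [t₀,T]. -/

import Mathlib

open Set intervalIntegral

/-- Claim 1: if `v ≤ η` on `[t₀, T]`, where `v = g e^{∫γ}` and `η = e^{∫γ}/μ`,
and the comparison condition holds, then `v' ≤ η'` on `[t₀, T]`. -/
theorem stmt4
    (t₀ T : ℝ) (hT : t₀ < T)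
    (g g' γ β μ μ' : ℝ → ℝ) (α : ℝ → ℝ → ℝ) (v η : ℝ → ℝ)
    (hgnonneg : ∀ t ∈ Set.Ici t₀, 0 ≤ g t)
    (hg : ∀ t ∈ Set.Ici t₀, HasDerivAt g (g' t) t)
    (hβ : ContinuousOn β (Set.Ici t₀))
    (hγ : Continuous γ)
    (hαnonneg : ∀ t ∈ Set.Ici t₀, ∀ y, 0 ≤ y → 0 ≤ α t y)
    (hαmono : ∀ t ∈ Set.Ici t₀, ∀ y z, 0 ≤ y → y ≤ z → α t y ≤ α t z)
    (hineq : ∀ t ∈ Set.Ici t₀, g' t ≤ -γ t * g t + α t (g t) + β t)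
    (hμpos : ∀ t ∈ Set.Ici t₀, 0 < μ t)
    (hμ : ∀ t ∈ Set.Ici t₀, HasDerivAt μ (μ' t) t)
    (hcomp : ∀ t ∈ Set.Icc t₀ T, α t (1 / μ t) + β t ≤ (1 / μ t) * (γ t - μ' t / μ t))
    (hv : v = fun t => g t * Real.exp (∫ s in t₀..t, γ s))
    (hη : η = fun t => Real.exp (∫ s in t₀..t, γ s) / μ t)
    (hle : ∀ t ∈ Set.Icc t₀ T, v t ≤ η t) :
    ∀ t ∈ Set.Icc t₀ T, deriv v t ≤ deriv η t := by
  intro t ht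
  have ht0 : t ∈ Set.Ici t₀ := ht.1
  have hμt := hμpos t ht0
  have hμne : μ t ≠ 0 := ne_of_gt hμt
  have hEpos : 0 < Real.exp (∫ s in t₀..t, γ s) := Real.exp_pos _
  have hInt : HasDerivAt (fun u => ∫ s in t₀..u, γ s) (γ t) t :=
    intervalIntegral.integral_hasDerivAt_right (hγ.intervalIntegrable _ _)
      (hγ.stronglyMeasurable.stronglyMeasurableAtFilter) hγ.continuousAt
  have hExp : HasDerivAt (fun u => Real.exp (∫ s in t₀..u, γ s))
      (Real.exp (∫ s in t₀..t, γ s) * γ t) t := hInt.exp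
  have hv' : HasDerivAt v
      (g' t * Real.exp (∫ s in t₀..t, γ s) + g t * (Real.exp (∫ s in t₀..t, γ s) * γ t)) t := by
    rw [hv]; exact (hg t ht0).mul hExp
  have hη' : HasDerivAt η
      ((Real.exp (∫ s in t₀..t, γ s) * γ t * μ t - Real.exp (∫ s in t₀..t, γ s) * μ' t)
        / μ t ^ 2) t := by
    rw [hη]; exact hExp.div (hμ t ht0) hμne
  rw [hv'.deriv, hη'.deriv]
  -- g t ≤ 1 / μ t
  have h1 := hle t ht
  rw [hv, hη] at h1
  simp only at h1
  have h1' : g t * Real.exp (∫ s in t₀..t, γ s) * μ t ≤ Real.exp (∫ s in t₀..t, γ s) :=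
    (le_div_iff₀ hμt).mp h1
  have hgle : g t ≤ 1 / μ t := by
    rw [le_div_iff₀ hμt]
    nlinarith [hEpos, h1']
  have hα : α t (g t) ≤ α t (1 / μ t) := hαmono t ht0 _ _ (hgnonneg t ht0) hgle
  have hkey : g' t + γ t * g t ≤ γ t / μ t - μ' t / μ t ^ 2 := by
    have h3 := hineq t ht0
    have h4 := hcomp t ht
    have h5 : (1 / μ t) * (γ t - μ' t / μ t) = γ t / μ t - μ' t / μ t ^ 2 := by
      field_simp
    linarith
  have hmul := mul_le_mul_of_nonneg_left hkey hEpos.le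
  have hrhs : (Real.exp (∫ s in t₀..t, γ s) * γ t * μ t - Real.exp (∫ s in t₀..t, γ s) * μ' t)
      / μ t ^ 2 = Real.exp (∫ s in t₀..t, γ s) * (γ t / μ t - μ' t / μ t ^ 2) := by
    field_simp
  rw [hrhs]
  nlinarith [hmul]
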